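/- Let a', b' ∈ ℝ with a' < b', and let l', u' : [a', b'] → ℝ be continuous functions with l'(x) < u'(x) for all x ∈ (a', b'). Set X = {(x, y) ∈ ℝ² : a' < x < b' and l'(x) < y < u'(x)}. Then X is equiregular to (0,1)² ⊆ ℝ²: there exists a homeomorphism φ : closure(X) → [0,1]² (for the subspace topologies inherited from ℝ²) such that φ(X) = (0,1)². -/

import Mathlib

open Set Filter Topology Bornology

private lemma sector_aux (a' b' : ℝ) (hab : a' < b')
    (l' u' : ℝ → ℝ)
    (hl : ContinuousOn l' (Set.Icc a' b')) (hu : ContinuousOn u' (Set.Icc a' b'))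
    (hlu : ∀ x ∈ Set.Ioo a' b', l' x < u' x)
    (X : Set (ℝ × ℝ))
    (hX : X = {q : ℝ × ℝ | q.1 ∈ Set.Ioo a' b' ∧ q.2 ∈ Set.Ioo (l' q.1) (u' q.1)})
    (s : ℝ → ℝ) (hs_cont : Continuous s)
    (hs_conc : ∀ p₁ ∈ Icc (0:ℝ) 1, ∀ p₂ ∈ Icc (0:ℝ) 1, ∀ a b : ℝ, 0 ≤ a → 0 ≤ b → a + b = 1 →
      a * s p₁ + b * s p₂ ≤ s (a * p₁ + b * p₂))
    (hs_pos : ∀ p ∈ Ioo (0:ℝ) 1, 0 < s p)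
    (hs_nonneg : ∀ p ∈ Icc (0:ℝ) 1, 0 ≤ s p)
    (hs_le : ∀ p ∈ Icc (0:ℝ) 1, s p ≤ 1)
    (hs0 : u' a' = l' a' → s 0 = 0)
    (hs0' : u' a' ≠ l' a' → 0 < s 0)
    (hs1 : u' b' = l' b' → s 1 = 0)
    (hs1' : u' b' ≠ l' b' → 0 < s 1) :
    ∃ φ : ↥(closure X) ≃ₜ ↥((Set.Icc (0:ℝ) 1) ×ˢ (Set.Icc (0:ℝ) 1)),
      ∀ q : ↥(closure X),
        (q : ℝ × ℝ) ∈ X ↔ (φ q : ℝ × ℝ) ∈ (Set.Ioo (0:ℝ) 1) ×ˢ (Set.Ioo (0:ℝ) 1) := by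
  have hba : (0:ℝ) < b' - a' := sub_pos.2 hab
  set σ : ℝ → ℝ := fun x => (x - a') / (b' - a') with hσdef
  set xof : ℝ → ℝ := fun p => a' + p * (b' - a') with hxofdef
  have hσx : ∀ p, σ (xof p) = p := fun p => by
    simp only [hσdef, hxofdef]; field_simp; ring
  have hxσ : ∀ x, xof (σ x) = x := fun x => by
    simp only [hσdef, hxofdef]; field_simp; ring
  have hσmapIcc : ∀ x ∈ Icc a' b', σ x ∈ Icc (0:ℝ) 1 := by
    intro x hx
    constructor
    · exact div_nonneg (by linarith [hx.1]) hba.le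
    · rw [div_le_one hba]; linarith [hx.2]
  have hσmapIoo : ∀ x ∈ Ioo a' b', σ x ∈ Ioo (0:ℝ) 1 := by
    intro x hx
    constructor
    · exact div_pos (by linarith [hx.1]) hba
    · rw [div_lt_one hba]; linarith [hx.2]
  have hxofIcc : ∀ p ∈ Icc (0:ℝ) 1, xof p ∈ Icc a' b' := by
    intro p hp
    constructor <;> simp only [hxofdef] <;> nlinarith [hp.1, hp.2]
  have hxofIoo : ∀ p ∈ Ioo (0:ℝ) 1, xof p ∈ Ioo a' b' := by
    intro p hp
    constructor <;> simp only [hxofdef] <;> nlinarith [hp.1, hp.2]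
  have hσcont : Continuous σ := (continuous_id.sub continuous_const).div_const _
  -- l' ≤ u' on the closed interval
  have hle : ∀ x ∈ Icc a' b', l' x ≤ u' x := by
    intro x hx
    have hnb : (𝓝[Ioo a' b'] x).NeBot := by
      rw [← mem_closure_iff_nhdsWithin_neBot, closure_Ioo hab.ne]; exact hx
    have htl : Tendsto l' (𝓝[Ioo a' b'] x) (𝓝 (l' x)) :=
      (hl x hx).mono_left (nhdsWithin_mono _ Ioo_subset_Icc_self)
    have htu : Tendsto u' (𝓝[Ioo a' b'] x) (𝓝 (u' x)) :=
      (hu x hx).mono_left (nhdsWithin_mono _ Ioo_subset_Icc_self)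
    exact le_of_tendsto_of_tendsto htl htu
      (eventually_mem_nhdsWithin.mono fun y hy => (hlu y hy).le)
  -- parametrization of the closed region
  set G : ℝ × ℝ → ℝ × ℝ :=
    fun pt => (xof pt.1, (1 - pt.2) * l' (xof pt.1) + pt.2 * u' (xof pt.1)) with hGdef
  have hGcont : ContinuousOn G (Icc (0:ℝ) 1 ×ˢ Icc (0:ℝ) 1) := by
    have hx1 : ContinuousOn (fun pt : ℝ × ℝ => xof pt.1) (Icc (0:ℝ) 1 ×ˢ Icc (0:ℝ) 1) :=
      (continuous_const.add (continuous_fst.mul continuous_const)).continuousOn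
    have hmaps : MapsTo (fun pt : ℝ × ℝ => xof pt.1) (Icc (0:ℝ) 1 ×ˢ Icc (0:ℝ) 1) (Icc a' b') :=
      fun pt hpt => hxofIcc _ hpt.1
    have hlc : ContinuousOn (fun pt : ℝ × ℝ => l' (xof pt.1)) (Icc (0:ℝ) 1 ×ˢ Icc (0:ℝ) 1) :=
      hl.comp hx1 hmaps
    have huc : ContinuousOn (fun pt : ℝ × ℝ => u' (xof pt.1)) (Icc (0:ℝ) 1 ×ˢ Icc (0:ℝ) 1) :=
      hu.comp hx1 hmaps
    exact hx1.prodMk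
      (((continuousOn_const.sub continuous_snd.continuousOn).mul hlc).add
        (continuous_snd.continuousOn.mul huc))
  set K := G '' (Icc (0:ℝ) 1 ×ˢ Icc (0:ℝ) 1) with hKdef
  have hKcompact : IsCompact K := (isCompact_Icc.prod isCompact_Icc).image_of_continuousOn hGcont
  have hXG : X = G '' (Ioo (0:ℝ) 1 ×ˢ Ioo (0:ℝ) 1) := by
    rw [hX]; ext q; constructor
    · rintro ⟨hx, hy⟩
      have hd : (0:ℝ) < u' q.1 - l' q.1 := sub_pos.2 (hlu _ hx)
      refine ⟨(σ q.1, (q.2 - l' q.1) / (u' q.1 - l' q.1)), ⟨hσmapIoo _ hx, ?_, ?_⟩, ?_⟩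
      · exact div_pos (sub_pos.2 hy.1) hd
      · rw [div_lt_one hd]; linarith [hy.2]
      · simp only [hGdef]
        rw [hxσ]
        rw [Prod.ext_iff]
        refine ⟨rfl, ?_⟩
        field_simp
        ring
    · rintro ⟨⟨p, t⟩, ⟨hp, ht⟩, rfl⟩
      have hx : xof p ∈ Ioo a' b' := hxofIoo p hp
      have hlt := hlu _ hx
      refine ⟨hx, ?_, ?_⟩ <;> simp only [hGdef] <;> nlinarith [ht.1, ht.2]
  have hclsq : closure (Ioo (0:ℝ) 1 ×ˢ Ioo (0:ℝ) 1) = Icc (0:ℝ) 1 ×ˢ Icc (0:ℝ) 1 := by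
    rw [closure_prod_eq, closure_Ioo (zero_ne_one)]
  have hXK : X ⊆ K := by
    rw [hXG, hKdef]
    exact image_mono (prod_mono Ioo_subset_Icc_self Ioo_subset_Icc_self)
  have hclX : closure X = K := by
    apply Subset.antisymm (closure_minimal hXK hKcompact.isClosed)
    calc K = G '' closure (Ioo (0:ℝ) 1 ×ˢ Ioo (0:ℝ) 1) := by rw [hclsq]
      _ ⊆ closure (G '' (Ioo (0:ℝ) 1 ×ˢ Ioo (0:ℝ) 1)) := (hclsq ▸ hGcont).image_closure
      _ = closure X := by rw [hXG]
  have hKmem : ∀ q ∈ K, q.1 ∈ Icc a' b' ∧ l' q.1 ≤ q.2 ∧ q.2 ≤ u' q.1 := by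
    rintro q ⟨⟨p, t⟩, ⟨hp, ht⟩, rfl⟩
    have hx : xof p ∈ Icc a' b' := hxofIcc p hp
    have hlu' := hle _ hx
    refine ⟨hx, ?_, ?_⟩ <;> simp only [hGdef] <;> nlinarith [ht.1, ht.2]
  -- the normalizing map Φ
  set ψ : ℝ × ℝ → ℝ :=
    fun q => s (σ q.1) * ((2*q.2 - l' q.1 - u' q.1) / (u' q.1 - l' q.1)) with hψdef
  set Φ : ℝ × ℝ → ℝ × ℝ := fun q => (σ q.1, ψ q) with hΦdef
  set Lo : Set (ℝ × ℝ) := {z | z.1 ∈ Ioo (0:ℝ) 1 ∧ -(s z.1) < z.2 ∧ z.2 < s z.1} with hLodef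
  have hbound : ∀ z ∈ K, |ψ z| ≤ s (σ z.1) := by
    intro z hz
    obtain ⟨hz1, hzl, hzu⟩ := hKmem z hz
    have hsnn := hs_nonneg _ (hσmapIcc _ hz1)
    rcases eq_or_lt_of_le (hle _ hz1) with hd | hd
    · have hnum : 2*z.2 - l' z.1 - u' z.1 = 0 := by
        have : z.2 = l' z.1 := le_antisymm (hd ▸ hzu) hzl
        rw [this]; linarith
      simp only [hψdef, hnum, zero_div, mul_zero, abs_zero]
      exact hsnn
    · have hden : (0:ℝ) < u' z.1 - l' z.1 := sub_pos.2 hd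
      have h1 : |2*z.2 - l' z.1 - u' z.1| ≤ u' z.1 - l' z.1 :=
        abs_le.2 ⟨by linarith, by linarith⟩
      calc |ψ z| = s (σ z.1) * (|2*z.2 - l' z.1 - u' z.1| / (u' z.1 - l' z.1)) := by
            simp only [hψdef]
            rw [abs_mul, abs_div, abs_of_nonneg hsnn, abs_of_pos hden]
        _ ≤ s (σ z.1) * 1 := by
            refine mul_le_mul_of_nonneg_left ?_ hsnn
            rw [div_le_one hden]; exact h1
        _ = s (σ z.1) := mul_one _
  have hmapsK : MapsTo (Prod.fst : ℝ × ℝ → ℝ) K (Icc a' b') := fun z hz => (hKmem z hz).1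
  have hlK : ContinuousOn (fun q : ℝ × ℝ => l' q.1) K :=
    hl.comp continuous_fst.continuousOn hmapsK
  have huK : ContinuousOn (fun q : ℝ × ℝ => u' q.1) K :=
    hu.comp continuous_fst.continuousOn hmapsK
  have hσa : σ a' = 0 := by simp [hσdef]
  have hσb : σ b' = 1 := by simp only [hσdef]; field_simp
  have hΦcont : ContinuousOn Φ K := by
    apply ((hσcont.comp continuous_fst).continuousOn).prodMk
    intro q hq
    obtain ⟨hq1, hql, hqu⟩ := hKmem q hq
    rcases eq_or_lt_of_le (hle _ hq1) with hd | hd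
    · -- pinched fiber
      have hq1' : q.1 = a' ∨ q.1 = b' := by
        by_contra hcon
        push_neg at hcon
        exact absurd (hlu q.1 ⟨lt_of_le_of_ne hq1.1 (Ne.symm hcon.1),
          lt_of_le_of_ne hq1.2 hcon.2⟩) (by rw [hd]; exact lt_irrefl _)
      have hval : s (σ q.1) = 0 := by
        rcases hq1' with h | h
        · rw [h, hσa]; exact hs0 (by rw [← h, ← hd])
        · rw [h, hσb]; exact hs1 (by rw [← h, ← hd])
      have hψq : ψ q = 0 := by
        have hnum : 2*q.2 - l' q.1 - u' q.1 = 0 := by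
          have : q.2 = l' q.1 := le_antisymm (hd ▸ hqu) hql
          rw [this]; linarith
        simp only [hψdef, hnum, zero_div, mul_zero]
      rw [ContinuousWithinAt, hψq]
      have hev : ∀ᶠ z in 𝓝[K] q, ‖ψ z‖ ≤ s (σ z.1) :=
        eventually_mem_nhdsWithin.mono fun z hz => by
          rw [Real.norm_eq_abs]; exact hbound z hz
      have ht : Tendsto (fun z : ℝ × ℝ => s (σ z.1)) (𝓝[K] q) (𝓝 (s (σ q.1))) :=
        ((hs_cont.comp (hσcont.comp continuous_fst)).tendsto q).mono_left nhdsWithin_le_nhds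
      rw [hval] at ht
      exact squeeze_zero_norm' hev ht
    · -- regular fiber
      have hden : ContinuousWithinAt (fun z : ℝ × ℝ => u' z.1 - l' z.1) K q :=
        (huK q hq).sub (hlK q hq)
      have hnum : ContinuousWithinAt (fun z : ℝ × ℝ => 2*z.2 - l' z.1 - u' z.1) K q :=
        (((continuous_const.mul continuous_snd).continuousWithinAt).sub (hlK q hq)).sub
          (huK q hq)
      exact ((hs_cont.comp (hσcont.comp continuous_fst)).continuousWithinAt).mul
        (hnum.div hden (sub_ne_zero.2 hd.ne'))
  have hΦX : Φ '' X = Lo := by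
    ext z; constructor
    · rintro ⟨q, hq, rfl⟩
      rw [hX] at hq
      obtain ⟨hx, hy⟩ := hq
      have hp : σ q.1 ∈ Ioo (0:ℝ) 1 := hσmapIoo _ hx
      have hsp := hs_pos _ hp
      have hden : (0:ℝ) < u' q.1 - l' q.1 := sub_pos.2 (hlu _ hx)
      refine ⟨hp, ?_, ?_⟩
      · have h1 : -1 < (2*q.2 - l' q.1 - u' q.1) / (u' q.1 - l' q.1) := by
          rw [neg_lt, ← neg_div]
          rw [div_lt_one hden]
          linarith [hy.1]
        simp only [hΦdef, hψdef]
        nlinarith [h1, hsp]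
      · have h2 : (2*q.2 - l' q.1 - u' q.1) / (u' q.1 - l' q.1) < 1 := by
          rw [div_lt_one hden]; linarith [hy.2]
        simp only [hΦdef, hψdef]
        nlinarith [h2, hsp]
    · rintro ⟨hp, h1, h2⟩
      have hx : xof z.1 ∈ Ioo a' b' := hxofIoo _ hp
      have hsp := hs_pos _ hp
      have hd : (0:ℝ) < u' (xof z.1) - l' (xof z.1) := sub_pos.2 (hlu _ hx)
      refine ⟨(xof z.1,
        (l' (xof z.1) + u' (xof z.1))/2
          + z.2 * (u' (xof z.1) - l' (xof z.1)) / (2 * s z.1)), ?_, ?_⟩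
      · rw [hX]
        have key1 : -((u' (xof z.1) - l' (xof z.1))/2)
            < z.2 * (u' (xof z.1) - l' (xof z.1)) / (2 * s z.1) := by
          rw [lt_div_iff₀ (by positivity : (0:ℝ) < 2 * s z.1)]
          nlinarith [h1, hd, hsp]
        have key2 : z.2 * (u' (xof z.1) - l' (xof z.1)) / (2 * s z.1)
            < (u' (xof z.1) - l' (xof z.1))/2 := by
          rw [div_lt_iff₀ (by positivity : (0:ℝ) < 2 * s z.1)]
          nlinarith [h2, hd, hsp]
        exact ⟨hx, by constructor <;> [linarith [key1]; linarith [key2]]⟩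
      · simp only [hΦdef, hψdef]
        rw [hσx]
        rw [Prod.ext_iff]
        refine ⟨rfl, ?_⟩
        field_simp
        ring
  have hΦinj : InjOn Φ K := by
    intro q hq r hr h
    simp only [hΦdef, Prod.ext_iff] at h
    obtain ⟨h1, h2⟩ := h
    have hx : q.1 = r.1 := by
      simp only [hσdef, div_left_inj' hba.ne'] at h1
      linarith
    obtain ⟨hq1, hql, hqu⟩ := hKmem q hq
    obtain ⟨hr1, hrl, hru⟩ := hKmem r hr
    rcases eq_or_lt_of_le (hle _ hq1) with hd | hd
    · have e1 : q.2 = l' q.1 := le_antisymm (hd ▸ hqu) hql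
      have e2 : r.2 = l' r.1 := by
        rw [← hx] at hrl hru ⊢
        exact le_antisymm (hd ▸ hru) hrl
      exact Prod.ext hx (by rw [e1, e2, hx])
    · have hspos : 0 < s (σ q.1) := by
        by_cases hσ0 : σ q.1 = 0
        · have hqa : q.1 = a' := by
            simp only [hσdef, div_eq_zero_iff] at hσ0
            rcases hσ0 with h | h
            · linarith
            · exact absurd h hba.ne'
          rw [hσ0]
          exact hs0' (by rw [← hqa]; exact hd.ne')
        · by_cases hσ1 : σ q.1 = 1
          · have hqb : q.1 = b' := by
              simp only [hσdef, div_eq_one_iff_eq hba.ne'] at hσ1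
              linarith
            rw [hσ1]
            exact hs1' (by rw [← hqb]; exact hd.ne')
          · exact hs_pos _ ⟨lt_of_le_of_ne (hσmapIcc _ hq1).1 (Ne.symm hσ0),
              lt_of_le_of_ne (hσmapIcc _ hq1).2 hσ1⟩
      have hden : u' q.1 - l' q.1 ≠ 0 := sub_ne_zero.2 hd.ne'
      simp only [hψdef, ← hx] at h2
      have h3 := mul_left_cancel₀ hspos.ne' h2
      rw [div_eq_div_iff hden hden] at h3
      have h4 := mul_right_cancel₀ hden h3
      exact Prod.ext hx (by linarith)
  have hΦK : Φ '' K = closure Lo := by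
    apply Subset.antisymm
    · have h1 : Φ '' closure X ⊆ closure (Φ '' X) := (hclX ▸ hΦcont).image_closure
      rw [hclX, hΦX] at h1
      exact h1
    · refine closure_minimal ?_ (hKcompact.image_of_continuousOn hΦcont).isClosed
      rw [← hΦX]
      exact image_mono hXK
  -- Lo is open, convex, bounded, nonempty
  have hLoOpen : IsOpen Lo := by
    have h1 : IsOpen {z : ℝ × ℝ | z.1 ∈ Ioo (0:ℝ) 1} := isOpen_Ioo.preimage continuous_fst
    have h2 : IsOpen {z : ℝ × ℝ | -(s z.1) < z.2} :=
      isOpen_lt ((hs_cont.comp continuous_fst).neg) continuous_snd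
    have h3 : IsOpen {z : ℝ × ℝ | z.2 < s z.1} :=
      isOpen_lt continuous_snd (hs_cont.comp continuous_fst)
    exact h1.inter (h2.inter h3)
  have hs_half := hs_pos (1/2) (by norm_num)
  have hLoNe : (interior Lo).Nonempty := by
    rw [hLoOpen.interior_eq]
    exact ⟨(1/2, 0), ⟨by norm_num, by simpa using hs_half, by simpa using hs_half⟩⟩
  have hLoConv : Convex ℝ Lo := by
    intro z hz w hw a b ha hb hab'
    obtain ⟨hz1, hz2, hz3⟩ := hz
    obtain ⟨hw1, hw2, hw3⟩ := hw
    have hsc := hs_conc z.1 (Ioo_subset_Icc_self hz1) w.1 (Ioo_subset_Icc_self hw1)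
      a b ha hb hab'
    have key : ∀ x₁ x₂ y₁ y₂ : ℝ, x₁ < y₁ → x₂ < y₂ → a * x₁ + b * x₂ < a * y₁ + b * y₂ := by
      intro x₁ x₂ y₁ y₂ hh₁ hh₂
      rcases lt_or_eq_of_le ha with ha' | ha'
      · have t1 := mul_lt_mul_of_pos_left hh₁ ha'
        have t2 := mul_le_mul_of_nonneg_left hh₂.le hb
        linarith
      · have hb1 : b = 1 := by linarith
        rw [← ha', hb1]; simpa using hh₂
    simp only [hLodef, mem_setOf_eq, Prod.fst_add, Prod.snd_add, Prod.smul_fst,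
      Prod.smul_snd, smul_eq_mul]
    refine ⟨⟨?_, ?_⟩, ?_, ?_⟩
    · have := key 0 0 z.1 w.1 hz1.1 hw1.1
      simpa using this
    · have := key z.1 w.1 1 1 hz1.2 hw1.2
      calc a * z.1 + b * w.1 < a * 1 + b * 1 := this
        _ = 1 := by linarith
    · have := key (-(s z.1)) (-(s w.1)) z.2 w.2 hz2 hw2
      have h' : -(s (a * z.1 + b * w.1)) ≤ a * (-(s z.1)) + b * (-(s w.1)) := by
        have : a * (-(s z.1)) + b * (-(s w.1)) = -(a * s z.1 + b * s w.1) := by ring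
        rw [this]
        linarith [hsc]
      linarith
    · have := key z.2 w.2 (s z.1) (s w.1) hz3 hw3
      linarith [hsc]
  have hLoBdd : IsBounded Lo := by
    apply ((Metric.isBounded_Icc (0:ℝ) 1).prod (Metric.isBounded_Icc (-1:ℝ) 1)).subset
    rintro z ⟨h1, h2, h3⟩
    have hsle := hs_le z.1 (Ioo_subset_Icc_self h1)
    exact ⟨Ioo_subset_Icc_self h1, by constructor <;> [linarith; linarith]⟩
  -- the target open square
  set T : Set (ℝ × ℝ) := Ioo (0:ℝ) 1 ×ˢ Ioo (0:ℝ) 1 with hTdef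
  have hTOpen : IsOpen T := isOpen_Ioo.prod isOpen_Ioo
  have hTConv : Convex ℝ T := (convex_Ioo _ _).prod (convex_Ioo _ _)
  have hTNe : (interior T).Nonempty := by
    rw [hTOpen.interior_eq]
    exact ⟨(1/2, 1/2), by constructor <;> constructor <;> norm_num⟩
  have hTBdd : IsBounded T :=
    ((Metric.isBounded_Icc (0:ℝ) 1).prod (Metric.isBounded_Icc (0:ℝ) 1)).subset
      (prod_mono Ioo_subset_Icc_self Ioo_subset_Icc_self)
  have hTcl : closure T = Icc (0:ℝ) 1 ×ˢ Icc (0:ℝ) 1 := by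
    rw [hTdef, closure_prod_eq, closure_Ioo (zero_ne_one)]
  obtain ⟨e, he1, he2, -⟩ := exists_homeomorph_image_eq (E := ℝ × ℝ) hLoConv
    hLoNe (NormedSpace.isVonNBounded_of_isBounded _ hLoBdd)
    hTConv hTNe (NormedSpace.isVonNBounded_of_isBounded _ hTBdd)
  rw [hLoOpen.interior_eq, hTOpen.interior_eq] at he1
  rw [hTcl] at he2
  -- assemble
  set F : ℝ × ℝ → ℝ × ℝ := fun q => e (Φ q) with hFdef
  have hFK : F '' (closure X) = Icc (0:ℝ) 1 ×ˢ Icc (0:ℝ) 1 := by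
    rw [hclX]
    calc F '' K = e '' (Φ '' K) := Set.image_comp _ _ _
      _ = e '' closure Lo := by rw [hΦK]
      _ = _ := he2
  have hFinj : InjOn F (closure X) := by
    rw [hclX]
    exact fun q hq r hr h => hΦinj hq hr (e.injective h)
  have hFcont : ContinuousOn F (closure X) := by
    rw [hclX]
    exact e.continuous.comp_continuousOn hΦcont
  haveI : CompactSpace ↥(closure X) := isCompact_iff_compactSpace.mp (hclX ▸ hKcompact)
  have hmem : ∀ q : ↥(closure X), F q ∈ Icc (0:ℝ) 1 ×ˢ Icc (0:ℝ) 1 := fun q =>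
    hFK ▸ mem_image_of_mem F q.2
  set ff : ↥(closure X) → ↥(Icc (0:ℝ) 1 ×ˢ Icc (0:ℝ) 1) := fun q => ⟨F q, hmem q⟩ with hffdef
  have hbij : Function.Bijective ff := by
    constructor
    · intro q r h
      exact Subtype.ext (hFinj q.2 r.2 (congrArg Subtype.val h))
    · rintro ⟨y, hy⟩
      rw [← hFK] at hy
      obtain ⟨q, hq, hqy⟩ := hy
      exact ⟨⟨q, hq⟩, Subtype.ext hqy⟩
  have hffcont : Continuous ff := Continuous.subtype_mk hFcont.restrict _
  refine ⟨Continuous.homeoOfEquivCompactToT2 (f := Equiv.ofBijective ff hbij) hffcont, ?_⟩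
  intro q
  constructor
  · intro hq
    have h1 : Φ ↑q ∈ Lo := by rw [← hΦX]; exact mem_image_of_mem Φ hq
    have h2 : e (Φ ↑q) ∈ T := by rw [← he1]; exact mem_image_of_mem _ h1
    exact h2
  · intro hq
    have hq' : F ↑q ∈ e '' Lo := by rw [he1]; exact hq
    obtain ⟨z, hz, hez⟩ := hq'
    have hzΦ : z = Φ ↑q := e.injective hez
    rw [hzΦ, ← hΦX] at hz
    obtain ⟨r, hr, hrq⟩ := hz
    have hrK : r ∈ K := hXK hr
    have hqK : (↑q : ℝ × ℝ) ∈ K := hclX ▸ q.2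
    have : r = ↑q := hΦinj hrK hqK hrq
    rwa [← this]

/-- for `a' < b'` and continuous `l', u' : [a', b'] → ℝ` with `l' < u'` on
`(a', b')`, the open sector `X = {(x,y) : a' < x < b', l'(x) < y < u'(x)}` is equiregular
to `(0,1)² ⊆ ℝ²`: there is a homeomorphism `φ : closure X → [0,1]²` with `φ(X) = (0,1)²`. -/
theorem sector_equiregular_unit_square (a' b' : ℝ) (hab : a' < b')
    (l' u' : ℝ → ℝ)
    (hl : ContinuousOn l' (Set.Icc a' b')) (hu : ContinuousOn u' (Set.Icc a' b'))
    (hlu : ∀ x ∈ Set.Ioo a' b', l' x < u' x)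
    (X : Set (ℝ × ℝ))
    (hX : X = {q : ℝ × ℝ | q.1 ∈ Set.Ioo a' b' ∧ q.2 ∈ Set.Ioo (l' q.1) (u' q.1)}) :
    ∃ φ : ↥(closure X) ≃ₜ ↥((Set.Icc (0:ℝ) 1) ×ˢ (Set.Icc (0:ℝ) 1)),
      ∀ q : ↥(closure X),
        (q : ℝ × ℝ) ∈ X ↔ (φ q : ℝ × ℝ) ∈ (Set.Ioo (0:ℝ) 1) ×ˢ (Set.Ioo (0:ℝ) 1) := by
  by_cases h₀ : u' a' = l' a' <;> by_cases h₁ : u' b' = l' b'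
  · exact sector_aux a' b' hab l' u' hl hu hlu X hX (fun p => p * (1 - p))
      (by continuity)
      (by intro p₁ hp₁ p₂ hp₂ a b ha hb hab'
          have hb' : b = 1 - a := by linarith
          subst hb'
          nlinarith [mul_nonneg (mul_nonneg ha hb) (sq_nonneg (p₁ - p₂))])
      (by intro p hp; nlinarith [hp.1, hp.2])
      (by intro p hp; nlinarith [hp.1, hp.2])
      (by intro p hp; nlinarith [hp.1, hp.2])
      (fun _ => by norm_num) (fun h => absurd h₀ h)
      (fun _ => by norm_num) (fun h => absurd h₁ h)
  · exact sector_aux a' b' hab l' u' hl hu hlu X hX (fun p => p)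
      continuous_id
      (by intro p₁ hp₁ p₂ hp₂ a b ha hb hab'; simp)
      (by intro p hp; exact hp.1)
      (by intro p hp; exact hp.1)
      (by intro p hp; exact hp.2)
      (fun _ => rfl) (fun h => absurd h₀ h)
      (fun h => absurd h h₁) (fun _ => one_pos)
  · exact sector_aux a' b' hab l' u' hl hu hlu X hX (fun p => 1 - p)
      (by continuity)
      (by intro p₁ hp₁ p₂ hp₂ a b ha hb hab'; nlinarith)
      (by intro p hp; linarith [hp.2])
      (by intro p hp; linarith [hp.2])
      (by intro p hp; linarith [hp.1])
      (fun h => absurd h h₀) (fun _ => by norm_num)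
      (fun _ => by norm_num) (fun h => absurd h₁ h)
  · exact sector_aux a' b' hab l' u' hl hu hlu X hX (fun _ => 1)
      continuous_const
      (by intro p₁ hp₁ p₂ hp₂ a b ha hb hab'; linarith)
      (by intro p hp; exact one_pos)
      (by intro p hp; exact zero_le_one)
      (by intro p hp; exact le_refl 1)
      (fun h => absurd h h₀) (fun _ => one_pos)
      (fun h => absurd h h₁) (fun _ => one_pos)
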